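/- Let G be a countable group, μ a random forest of finite width on G, and suppose there exists a constant K such that ‖f‖_{ℓ²(G)} ≤ K·‖f‖_{T¹(G)} for all finitely supported f : G → ℂ. Then deg(μ)² / width(μ) ≤ 4K². -/

import Mathlib

open SimpleGraph MeasureTheory ENNReal

def forestGraph {G : Type*} (F : G × G → Bool) : SimpleGraph G :=
  SimpleGraph.fromRel fun a b => F (a, b) = true

def IsForest {G : Type*} (F : G × G → Bool) : Prop :=
  (∀ a b, F (a, b) = F (b, a)) ∧ (∀ a, F (a, a) = false) ∧ (forestGraph F).IsAcyclic

section Lists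
variable {V : Type*} {H : SimpleGraph V}

theorem walk_of_chain {a b : V} {l : List V} (h : List.Chain H.Adj a l)
    (hb : (a :: l).getLast (List.cons_ne_nil a l) = b) :
    ∃ p : H.Walk a b, p.support = a :: l := by
  induction l generalizing a with
  | nil =>
    obtain rfl : a = b := by simpa using hb
    exact ⟨Walk.nil, by simp⟩
  | cons c l ih =>
    obtain ⟨hac, hcl⟩ := List.chain_cons.mp h
    have hb' : (c :: l).getLast (List.cons_ne_nil c l) = b := by
      rw [← hb, List.getLast_cons (List.cons_ne_nil c l)]
    obtain ⟨p, hp⟩ := ih hcl hb'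
    exact ⟨Walk.cons hac p, by simp [hp]⟩

theorem chain_of_walk {a b : V} (p : H.Walk a b) :
    List.Chain H.Adj a p.support.tail ∧
      ((a :: p.support.tail).getLast (List.cons_ne_nil _ _) = b) ∧
      p.support = a :: p.support.tail := by
  have hsupp : p.support = a :: p.support.tail := Walk.support_eq_cons p
  refine ⟨?_, ?_, hsupp⟩
  · have := p.isChain_adj_support
    rw [hsupp] at this
    exact this
  · exact (List.getLast_congr _ _ hsupp.symm).trans p.getLast_support

end Lists

section Events
variable {G : Type*} [Countable G]

abbrev Omeg (G : Type*) := (G × G) → Bool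

def ChainSet (R : G → G → Set (Omeg G)) (a : G) (l : List G) : Set (Omeg G) :=
  {F | List.Chain (fun x y => F ∈ R x y) a l}

theorem measurableSet_chainSet {R : G → G → Set (Omeg G)}
    (hR : ∀ x y, MeasurableSet (R x y)) (a : G) (l : List G) :
    MeasurableSet (ChainSet R a l) := by
  induction l generalizing a with
  | nil => simpa [ChainSet, List.Chain, List.IsChain.singleton] using MeasurableSet.univ
  | cons c l ih =>
    have : ChainSet R a (c :: l) = R a c ∩ ChainSet R c l := by
      ext F; simp [ChainSet, List.Chain, List.isChain_cons_cons]
    rw [this]; exact (hR a c).inter (ih c)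

def ReachSet (R : G → G → Set (Omeg G)) (a b : G) : Set (Omeg G) :=
  ⋃ (l : List G) (_ : (a :: l).getLast (List.cons_ne_nil a l) = b), ChainSet R a l

theorem measurableSet_reachSet {R : G → G → Set (Omeg G)}
    (hR : ∀ x y, MeasurableSet (R x y)) (a b : G) :
    MeasurableSet (ReachSet R a b) :=
  MeasurableSet.iUnion fun l => MeasurableSet.iUnion fun _ => measurableSet_chainSet hR a l

def AvoidSet (R : G → G → Set (Omeg G)) (a b v : G) : Set (Omeg G) :=
  ⋃ (l : List G) (_ : (a :: l).getLast (List.cons_ne_nil a l) = b ∧ v ∉ a :: l),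
    ChainSet R a l

theorem measurableSet_avoidSet {R : G → G → Set (Omeg G)}
    (hR : ∀ x y, MeasurableSet (R x y)) (a b v : G) :
    MeasurableSet (AvoidSet R a b v) :=
  MeasurableSet.iUnion fun l => MeasurableSet.iUnion fun _ => measurableSet_chainSet hR a l

/-- Characterization of reach sets via an `F`-dependent graph. -/
theorem mem_reachSet {R : G → G → Set (Omeg G)} {𝒢 : Omeg G → SimpleGraph G}
    (hmatch : ∀ F x y, F ∈ R x y ↔ (𝒢 F).Adj x y) (a b : G) (F : Omeg G) :
    F ∈ ReachSet R a b ↔ (𝒢 F).Reachable a b := by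
  constructor
  · rintro ⟨S, ⟨l, rfl⟩, hF⟩
    simp only [Set.mem_iUnion] at hF
    obtain ⟨hl, hFc⟩ := hF
    have hchain : List.Chain (𝒢 F).Adj a l := by
      refine List.Chain.imp (fun x y h => ?_) hFc
      exact (hmatch F x y).mp h
    obtain ⟨p, -⟩ := walk_of_chain hchain hl
    exact ⟨p⟩
  · rintro ⟨p⟩
    obtain ⟨hchain, hlast, -⟩ := chain_of_walk p
    refine Set.mem_iUnion.mpr ⟨p.support.tail, Set.mem_iUnion.mpr ⟨hlast, ?_⟩⟩
    exact List.Chain.imp (fun x y h => (hmatch F x y).mpr h) hchain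

theorem mem_avoidSet {R : G → G → Set (Omeg G)} {𝒢 : Omeg G → SimpleGraph G}
    (hmatch : ∀ F x y, F ∈ R x y ↔ (𝒢 F).Adj x y) (a b v : G) (F : Omeg G) :
    F ∈ AvoidSet R a b v ↔ ∃ p : (𝒢 F).Walk a b, v ∉ p.support := by
  constructor
  · rintro ⟨S, ⟨l, rfl⟩, hF⟩
    simp only [Set.mem_iUnion] at hF
    obtain ⟨⟨hl, hv⟩, hFc⟩ := hF
    have hchain : List.Chain (𝒢 F).Adj a l :=
      List.Chain.imp (fun x y h => (hmatch F x y).mp h) hFc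
    obtain ⟨p, hp⟩ := walk_of_chain hchain hl
    exact ⟨p, by rw [hp]; exact hv⟩
  · rintro ⟨p, hv⟩
    obtain ⟨hchain, hlast, hsupp⟩ := chain_of_walk p
    refine Set.mem_iUnion.mpr ⟨p.support.tail, Set.mem_iUnion.mpr ⟨⟨hlast, ?_⟩, ?_⟩⟩
    · rw [← hsupp]; exact hv
    · exact List.Chain.imp (fun x y h => (hmatch F x y).mpr h) hchain

end Events


section Graph
variable {V : Type*} (ι : V → ℕ)

/-- `r` is the root of the component of `a`: the reachable vertex with minimal index. -/
def IsRoot (H : SimpleGraph V) (a r : V) : Prop :=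
  H.Reachable a r ∧ ∀ x, H.Reachable a x → ι r ≤ ι x

/-- `b` is the parent of `a`: they are adjacent and `b` reaches the root avoiding `a`. -/
def Par (H : SimpleGraph V) (a b : V) : Prop :=
  H.Adj a b ∧ ∃ r, IsRoot ι H a r ∧ ∃ p : H.Walk b r, a ∉ p.support

variable {ι}

theorem isRoot_exists (H : SimpleGraph V) (a : V) : ∃ r, IsRoot ι H a r := by
  classical
  have hne : ∃ n, ∃ x, H.Reachable a x ∧ ι x = n := ⟨ι a, a, Reachable.refl a, rfl⟩
  obtain ⟨r, hr, hrn⟩ := Nat.find_spec hne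
  exact ⟨r, hr, fun x hx => hrn ▸ Nat.find_min' hne ⟨x, hx, rfl⟩⟩

theorem isRoot_unique (hι : Function.Injective ι) {H : SimpleGraph V} {a r r' : V}
    (h : IsRoot ι H a r) (h' : IsRoot ι H a r') : r = r' :=
  hι (le_antisymm (h.2 _ h'.1) (h'.2 _ h.1))

theorem isRoot_congr {H : SimpleGraph V} {a b : V} (hab : H.Reachable a b) (r : V) :
    IsRoot ι H a r ↔ IsRoot ι H b r := by
  unfold IsRoot
  constructor
  · rintro ⟨h1, h2⟩
    exact ⟨hab.symm.trans h1, fun x hx => h2 x (hab.trans hx)⟩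
  · rintro ⟨h1, h2⟩
    exact ⟨hab.trans h1, fun x hx => h2 x (hab.symm.trans hx)⟩

theorem par_total [DecidableEq V] {H : SimpleGraph V} {a b : V} (hab : H.Adj a b) :
    Par ι H a b ∨ Par ι H b a := by
  obtain ⟨r, hr⟩ := isRoot_exists (ι := ι) H a
  obtain ⟨w⟩ := hr.1
  set p := w.toPath with hp
  by_cases hbp : b ∈ (p : H.Walk a r).support
  · left
    refine ⟨hab, r, hr, (p : H.Walk a r).dropUntil b hbp, ?_⟩
    intro hmem
    have hnd := p.2.support_nodup
    have hspec := SimpleGraph.Walk.take_spec (p : H.Walk a r) hbp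
    rw [← hspec, SimpleGraph.Walk.support_append] at hnd
    have hd := (List.nodup_append.mp hnd).2.2
    -- a is in support of takeUntil (it's the start)
    have ha1 : a ∈ ((p : H.Walk a r).takeUntil b hbp).support := Walk.start_mem_support _
    -- a in dropUntil support; a ≠ b so a in its tail
    have hane : a ≠ b := hab.ne
    have ha2 : a ∈ ((p : H.Walk a r).dropUntil b hbp).support.tail := by
      have := (SimpleGraph.Walk.support_eq_cons ((p : H.Walk a r).dropUntil b hbp)) ▸ hmem
      rcases List.mem_cons.mp this with h | h
      · exact absurd h hane
      · exact h
    exact hd a ha1 a ha2 rfl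
  · right
    refine ⟨hab.symm, r, (isRoot_congr (Adj.reachable hab) r).mp hr, (p : H.Walk a r), hbp⟩

theorem par_unique [DecidableEq V] (hι : Function.Injective ι) {H : SimpleGraph V} (hH : H.IsAcyclic)
    {a b c : V} (h1 : Par ι H a b) (h2 : Par ι H a c) : b = c := by
  obtain ⟨hab, r, hr, p, hp⟩ := h1
  obtain ⟨hac, r', hr', q, hq⟩ := h2
  obtain rfl : r = r' := isRoot_unique hι hr hr'
  have hpb : a ∉ p.bypass.support := fun h => hp (Walk.support_bypass_subset _ h)
  have hqb : a ∉ q.bypass.support := fun h => hq (Walk.support_bypass_subset _ h)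
  have hpath := hH.path_unique ⟨Walk.cons hab p.bypass, (Walk.bypass_isPath p).cons hpb⟩
    ⟨Walk.cons hac q.bypass, (Walk.bypass_isPath q).cons hqb⟩
  have hw : Walk.cons hab p.bypass = Walk.cons hac q.bypass := congrArg Subtype.val hpath
  have hs : (Walk.cons hab p.bypass).support = (Walk.cons hac q.bypass).support :=
    congrArg Walk.support hw
  rw [Walk.support_cons, Walk.support_cons, Walk.support_eq_cons p.bypass,
    Walk.support_eq_cons q.bypass] at hs
  simp only [List.cons.injEq] at hs
  exact hs.2.1

end Graph

section Events2
variable {G : Type*} [Countable G]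

def AdjSet (a b : G) : Set (Omeg G) := {F | (forestGraph F).Adj a b}

theorem mem_adjSet {a b : G} {F : Omeg G} : F ∈ AdjSet a b ↔ (forestGraph F).Adj a b :=
  Iff.rfl

theorem measurableSet_coord (p : G × G) : MeasurableSet {F : Omeg G | F p = true} := by
  have h : {F : Omeg G | F p = true} = (fun F : Omeg G => F p) ⁻¹' {true} := by ext F; simp
  rw [h]
  exact (measurable_pi_apply p) (measurableSet_singleton true)

theorem measurableSet_adjSet (a b : G) : MeasurableSet (AdjSet a b) := by
  classical
  have : AdjSet a b = {F : Omeg G | a ≠ b} ∩ ({F | F (a,b) = true} ∪ {F | F (b,a) = true}) := by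
    ext F
    show (forestGraph F).Adj a b ↔ _
    rw [forestGraph, SimpleGraph.fromRel_adj]
    simp only [Set.mem_inter_iff, Set.mem_setOf_eq, Set.mem_union]
  rw [this]
  by_cases hab : a = b
  · have h2 : {F : Omeg G | a ≠ b} = (∅ : Set (Omeg G)) := by ext F; simp [hab]
    rw [h2, Set.empty_inter]
    exact MeasurableSet.empty
  · have h2 : {F : Omeg G | a ≠ b} = Set.univ := by ext F; simp [hab]
    rw [h2]
    exact MeasurableSet.univ.inter ((measurableSet_coord (a,b)).union (measurableSet_coord (b,a)))

/-- adjacency avoiding one edge. -/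
def RDel (a b : G) (x y : G) : Set (Omeg G) :=
  {F | (forestGraph F).Adj x y ∧ s(x, y) ≠ s(a, b)}

theorem measurableSet_rDel (a b x y : G) : MeasurableSet (RDel a b x y) := by
  by_cases h : s(x,y) = s(a,b)
  · have : RDel a b x y = ∅ := by ext F; simp [RDel, h]
    simp [this]
  · have : RDel a b x y = AdjSet x y := by ext F; simp [RDel, AdjSet, h]
    rw [this]; exact measurableSet_adjSet x y

theorem rDel_match (a b : G) (F : Omeg G) (x y : G) :
    F ∈ RDel a b x y ↔ ((forestGraph F).deleteEdges {s(a,b)}).Adj x y := by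
  simp [RDel, SimpleGraph.deleteEdges_adj]

theorem forestSet_eq :
    {F : Omeg G | IsForest F} =
      ((⋂ (p : G × G), {F : Omeg G | F p = F (p.2, p.1)}) ∩
        ⋂ (a : G), {F : Omeg G | F (a,a) = false}) ∩
      ⋂ (a : G), ⋂ (b : G), (AdjSet a b ∩ ReachSet (RDel a b) a b)ᶜ := by
  ext F
  simp only [Set.mem_setOf_eq, Set.mem_inter_iff, Set.mem_iInter, Set.mem_compl_iff, IsForest]
  constructor
  · rintro ⟨hsym, hirr, hacyc⟩
    refine ⟨⟨fun p => hsym p.1 p.2, hirr⟩, fun a b hmem => ?_⟩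
    obtain ⟨hadj, hreach⟩ := hmem
    have hreach' : ((forestGraph F).deleteEdges {s(a,b)}).Reachable a b :=
      (mem_reachSet (rDel_match a b) a b F).mp hreach
    have hbridge := (SimpleGraph.isAcyclic_iff_forall_adj_isBridge.mp hacyc) hadj
    exact (SimpleGraph.isBridge_iff.mp hbridge) hreach'
  · rintro ⟨⟨hsym, hirr⟩, hnc⟩
    refine ⟨fun a b => hsym (a, b), hirr, ?_⟩
    rw [SimpleGraph.isAcyclic_iff_forall_adj_isBridge]
    intro a b hadj
    rw [SimpleGraph.isBridge_iff]
    refine fun hreach => hnc a b ⟨hadj, ?_⟩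
    exact (mem_reachSet (rDel_match a b) a b F).mpr hreach

theorem measurableSet_forestSet : MeasurableSet {F : Omeg G | IsForest F} := by
  rw [forestSet_eq]
  refine MeasurableSet.inter (MeasurableSet.inter ?_ ?_) ?_
  · refine MeasurableSet.iInter fun p => ?_
    have : {F : Omeg G | F p = F (p.2, p.1)} =
        ({F : Omeg G | F p = true} ∩ {F | F (p.2, p.1) = true}) ∪
        ({F | F p = true}ᶜ ∩ {F | F (p.2, p.1) = true}ᶜ) := by
      ext F
      rcases Bool.eq_false_or_eq_true (F p) with h | h <;>
        rcases Bool.eq_false_or_eq_true (F (p.2, p.1)) with h' | h' <;>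
        simp [h, h']
    rw [this]
    exact ((measurableSet_coord p).inter (measurableSet_coord _)).union
      ((measurableSet_coord p).compl.inter (measurableSet_coord _).compl)
  · refine MeasurableSet.iInter fun a => ?_
    have : {F : Omeg G | F (a,a) = false} = {F : Omeg G | F (a,a) = true}ᶜ := by
      ext F; simp
    rw [this]; exact (measurableSet_coord _).compl
  · refine MeasurableSet.iInter fun a => MeasurableSet.iInter fun b => ?_
    exact ((measurableSet_adjSet a b).inter
      (measurableSet_reachSet (measurableSet_rDel a b) a b)).compl

variable (ι : G → ℕ)

def RootSet (a r : G) : Set (Omeg G) :=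
  ReachSet (fun x y => AdjSet x y) a r ∩
    ⋂ (x : G), {F : Omeg G | F ∈ ReachSet (fun x y => AdjSet x y) a x → ι r ≤ ι x}

theorem adj_match (F : Omeg G) (x y : G) : F ∈ AdjSet x y ↔ (forestGraph F).Adj x y := Iff.rfl

theorem mem_rootSet {a r : G} {F : Omeg G} :
    F ∈ RootSet ι a r ↔ IsRoot ι (forestGraph F) a r := by
  simp only [RootSet, Set.mem_inter_iff, Set.mem_iInter, Set.mem_setOf_eq, IsRoot]
  rw [mem_reachSet (adj_match) a r F]
  refine and_congr Iff.rfl (forall_congr' fun x => ?_)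
  rw [mem_reachSet (adj_match) a x F]

theorem measurableSet_rootSet (a r : G) : MeasurableSet (RootSet ι a r) := by
  refine (measurableSet_reachSet (fun x y => measurableSet_adjSet x y) a r).inter
    (MeasurableSet.iInter fun x => ?_)
  by_cases h : ι r ≤ ι x
  · have : {F : Omeg G | F ∈ ReachSet (fun x y => AdjSet x y) a x → ι r ≤ ι x} = Set.univ := by
      ext F; simp [h]
    rw [this]; exact MeasurableSet.univ
  · have : {F : Omeg G | F ∈ ReachSet (fun x y => AdjSet x y) a x → ι r ≤ ι x} =
        (ReachSet (fun x y => AdjSet x y) a x)ᶜ := by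
      ext F; simp [h]
    rw [this]
    exact (measurableSet_reachSet (fun x y => measurableSet_adjSet x y) a x).compl

def ParSet (a b : G) : Set (Omeg G) :=
  AdjSet a b ∩ ⋃ (r : G), RootSet ι a r ∩ AvoidSet (fun x y => AdjSet x y) b r a

theorem mem_parSet {a b : G} {F : Omeg G} :
    F ∈ ParSet ι a b ↔ Par ι (forestGraph F) a b := by
  simp only [ParSet, Set.mem_inter_iff, Set.mem_iUnion, Par]
  refine and_congr Iff.rfl (exists_congr fun r => and_congr (mem_rootSet ι) ?_)
  exact mem_avoidSet (adj_match) b r a F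

theorem measurableSet_parSet (a b : G) : MeasurableSet (ParSet ι a b) :=
  (measurableSet_adjSet a b).inter <| MeasurableSet.iUnion fun r =>
    (measurableSet_rootSet ι a r).inter
      (measurableSet_avoidSet (fun x y => measurableSet_adjSet x y) b r a)

/-- The main event: `F` is a forest and `b` is the parent of `a` in it. -/
def ESet (a b : G) : Set (Omeg G) :=
  {F : Omeg G | IsForest F} ∩ ParSet ι a b

theorem measurableSet_eSet (a b : G) : MeasurableSet (ESet ι a b) :=
  measurableSet_forestSet.inter (measurableSet_parSet ι a b)

end Events2
noncomputable def T1norm {K : Type*} [Group K] (f : K → ℂ) : ℝ≥0∞ :=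
  ⨅ (d : (K × K → ℂ) × (K × K → ℂ))
    (_ : ∀ g g' : K, f (g⁻¹ * g') = d.1 (g, g') + d.2 (g, g')),
      (⨆ g : K, ∑' g' : K, ENNReal.ofReal ‖d.1 (g, g')‖) +
      (⨆ g : K, ∑' g' : K, ENNReal.ofReal ‖d.2 (g', g)‖)

theorem stmt12 {G : Type*} [Group G] [Countable G]
    (μ : Measure ((G × G) → Bool)) [IsProbabilityMeasure μ]
    (hforest : μ {F | IsForest F} = 1)
    (hinv : ∀ g : G,
      Measure.map (fun (F : (G × G) → Bool) (p : G × G) => F (g⁻¹ * p.1, g⁻¹ * p.2)) μ = μ)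
    (hwidth : {g : G | μ {F | F (1, g) = true} ≠ 0}.Finite)
    (K : ℝ)
    (hK : ∀ f : G → ℂ, (Function.support f).Finite →
      ENNReal.ofReal (Real.sqrt (∑' g : G, ‖f g‖ ^ 2)) ≤ ENNReal.ofReal K * T1norm f) :
    (∑' g : G, (μ {F | F (1, g) = true}).toReal) ^ 2
        / ({g : G | μ {F | F (1, g) = true} ≠ 0}.ncard : ℝ) ≤ 4 * K ^ 2 := by
  classical
  obtain ⟨ι, hι⟩ := exists_injective_nat G
  set T : G → G → Set (Omeg G) := fun a b => {F | F (a, b) = true} with hTdef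
  have hTcoord : ∀ a b : G, T a b = {F : Omeg G | F (a, b) = true} := fun a b => rfl
  -- invariance
  have hTinv : ∀ a b : G, μ (T a b) = μ (T 1 (a⁻¹ * b)) := by
    intro a b
    have h1 := hinv a⁻¹
    simp only [inv_inv] at h1
    have hm : Measurable (fun (F : Omeg G) (p : G × G) => F (a * p.1, a * p.2)) :=
      measurable_pi_lambda _ fun p => measurable_pi_apply _
    have h2 : (fun (F : Omeg G) (p : G × G) => F (a * p.1, a * p.2)) ⁻¹' (T 1 (a⁻¹ * b))
        = T a b := by
      ext F
      simp only [hTdef, Set.mem_preimage, Set.mem_setOf_eq, mul_one, mul_inv_cancel_left]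
    conv_rhs => rw [← h1]
    rw [Measure.map_apply hm (measurableSet_coord (1, a⁻¹ * b)), h2]
  -- E ⊆ T
  have hEsub : ∀ a b : G, ESet ι a b ⊆ T a b := by
    intro a b F hF
    obtain ⟨hfor, hpar⟩ := hF
    obtain ⟨hadj, -⟩ := (mem_parSet ι).mp hpar
    rw [forestGraph, SimpleGraph.fromRel_adj] at hadj
    obtain ⟨hne, hor⟩ := hadj
    show F (a, b) = true
    rcases hor with h | h
    · exact h
    · rw [hfor.1 a b]; exact h
  -- cover
  have hcover : ∀ a b : G, T a b ⊆ (ESet ι a b ∪ ESet ι b a) ∪ {F | IsForest F}ᶜ := by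
    intro a b F hF
    by_cases hfor : IsForest F
    · have hFab : F (a, b) = true := hF
      have hne : a ≠ b := by
        rintro rfl
        rw [hfor.2.1 a] at hFab
        exact Bool.false_ne_true hFab
      have hadj : (forestGraph F).Adj a b := by
        rw [forestGraph, SimpleGraph.fromRel_adj]
        exact ⟨hne, Or.inl hFab⟩
      rcases par_total (ι := ι) hadj with h | h
      · exact Or.inl (Or.inl ⟨hfor, (mem_parSet ι).mpr h⟩)
      · exact Or.inl (Or.inr ⟨hfor, (mem_parSet ι).mpr h⟩)
    · exact Or.inr hfor
  have hnull : μ {F : Omeg G | IsForest F}ᶜ = 0 := by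
    have h := measure_compl measurableSet_forestSet (measure_ne_top μ _)
    rw [hforest, measure_univ] at h
    simpa using h
  have hdisj : ∀ a : G, Pairwise (Function.onFun Disjoint fun b => ESet ι a b) := by
    intro a b c hbc
    refine Set.disjoint_left.mpr fun F hFb hFc => hbc ?_
    exact par_unique hι hFb.1.2.2 ((mem_parSet ι).mp hFb.2) ((mem_parSet ι).mp hFc.2)
  have hrow : ∀ a : G, (∑' b : G, μ (ESet ι a b)) ≤ 1 := by
    intro a
    rw [← measure_iUnion (hdisj a) (fun b => measurableSet_eSet ι a b)]
    exact prob_le_one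
  have hcol : ∀ a b : G, μ (T a b) - μ (ESet ι a b) ≤ μ (ESet ι b a) := by
    intro a b
    rw [tsub_le_iff_left]
    calc μ (T a b) ≤ μ ((ESet ι a b ∪ ESet ι b a) ∪ {F | IsForest F}ᶜ) :=
          measure_mono (hcover a b)
      _ ≤ μ (ESet ι a b ∪ ESet ι b a) + μ ({F : Omeg G | IsForest F}ᶜ) := measure_union_le _ _
      _ = μ (ESet ι a b ∪ ESet ι b a) := by rw [hnull, add_zero]
      _ ≤ μ (ESet ι a b) + μ (ESet ι b a) := measure_union_le _ _
  -- the function and decomposition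
  set f : G → ℂ := fun g => ((μ (T 1 g)).toReal : ℂ) with hfdef
  set d : ((G × G) → ℂ) × ((G × G) → ℂ) :=
    (fun p => ((μ (ESet ι p.1 p.2)).toReal : ℂ),
     fun p => ((μ (T p.1 p.2) - μ (ESet ι p.1 p.2)).toReal : ℂ)) with hddef
  have hdec : ∀ g g' : G, f (g⁻¹ * g') = d.1 (g, g') + d.2 (g, g') := by
    intro g g'
    have hle : μ (ESet ι g g') ≤ μ (T g g') := measure_mono (hEsub g g')
    have hreal : (μ (T g g')).toReal
        = (μ (ESet ι g g')).toReal + (μ (T g g') - μ (ESet ι g g')).toReal := by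
      rw [ENNReal.toReal_sub_of_le hle (measure_ne_top μ _)]
      ring
    show ((μ (T 1 (g⁻¹ * g'))).toReal : ℂ) = _
    rw [← hTinv g g']
    show ((μ (T g g')).toReal : ℂ)
      = ((μ (ESet ι g g')).toReal : ℂ) + ((μ (T g g') - μ (ESet ι g g')).toReal : ℂ)
    rw [hreal]
    push_cast
    ring
  have hT1 : T1norm f ≤ 2 := by
    refine le_trans (iInf_le_of_le d (iInf_le_of_le hdec le_rfl)) ?_
    have h1 : (⨆ g : G, ∑' g' : G, ENNReal.ofReal ‖d.1 (g, g')‖) ≤ 1 := by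
      refine iSup_le fun g => ?_
      have heq : ∀ g' : G, ENNReal.ofReal ‖d.1 (g, g')‖ = μ (ESet ι g g') := by
        intro g'
        show ENNReal.ofReal ‖(((μ (ESet ι g g')).toReal : ℝ) : ℂ)‖ = _
        rw [Complex.norm_real, Real.norm_eq_abs, abs_of_nonneg ENNReal.toReal_nonneg,
          ENNReal.ofReal_toReal (measure_ne_top μ _)]
      rw [tsum_congr heq]
      exact hrow g
    have h2 : (⨆ g : G, ∑' g' : G, ENNReal.ofReal ‖d.2 (g', g)‖) ≤ 1 := by
      refine iSup_le fun g => ?_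
      have hb : ∀ g' : G, ENNReal.ofReal ‖d.2 (g', g)‖ ≤ μ (ESet ι g g') := by
        intro g'
        show ENNReal.ofReal ‖(((μ (T g' g) - μ (ESet ι g' g)).toReal : ℝ) : ℂ)‖ ≤ _
        rw [Complex.norm_real, Real.norm_eq_abs, abs_of_nonneg ENNReal.toReal_nonneg,
          ENNReal.ofReal_toReal]
        · exact hcol g' g
        · exact ((tsub_le_self).trans_lt (measure_lt_top μ _)).ne
      calc (∑' g' : G, ENNReal.ofReal ‖d.2 (g', g)‖) ≤ ∑' g' : G, μ (ESet ι g g') :=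
            ENNReal.tsum_le_tsum hb
        _ ≤ 1 := hrow g
    calc (⨆ g : G, ∑' g' : G, ENNReal.ofReal ‖d.1 (g, g')‖)
          + (⨆ g : G, ∑' g' : G, ENNReal.ofReal ‖d.2 (g', g)‖) ≤ 1 + 1 := add_le_add h1 h2
      _ = 2 := one_add_one_eq_two
  -- finite support
  have hsupp : Function.support f ⊆ {g : G | μ {F | F (1, g) = true} ≠ 0} := by
    intro g hg
    simp only [Set.mem_setOf_eq]
    intro h0
    apply hg
    show ((μ (T 1 g)).toReal : ℂ) = 0
    rw [show μ (T 1 g) = 0 from h0]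
    simp
  have hKf := hK f ((hwidth.subset hsupp))
  -- real-valued quantities
  set x : G → ℝ := fun g => (μ (T 1 g)).toReal with hxdef
  have hxnn : ∀ g, 0 ≤ x g := fun g => ENNReal.toReal_nonneg
  set Wf : Finset G := hwidth.toFinset with hWf
  have hx0 : ∀ g ∉ Wf, x g = 0 := by
    intro g hg
    rw [hWf, Set.Finite.mem_toFinset] at hg
    simp only [Set.mem_setOf_eq, not_not] at hg
    show (μ (T 1 g)).toReal = 0
    rw [show μ (T 1 g) = 0 from hg]
    simp
  have hsum1 : (∑' g : G, (μ {F | F (1, g) = true}).toReal) = ∑ g ∈ Wf, x g :=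
    tsum_eq_sum hx0
  have hnorm : ∀ g : G, ‖f g‖ ^ 2 = x g ^ 2 := by
    intro g
    show ‖((x g : ℝ) : ℂ)‖ ^ 2 = x g ^ 2
    rw [Complex.norm_real, Real.norm_eq_abs, sq_abs]
  have hsum2 : (∑' g : G, ‖f g‖ ^ 2) = ∑ g ∈ Wf, x g ^ 2 := by
    rw [tsum_congr hnorm]
    exact tsum_eq_sum fun g hg => by rw [hx0 g hg]; ring
  have hncard : ({g : G | μ {F | F (1, g) = true} ≠ 0}.ncard : ℝ) = (Wf.card : ℝ) := by
    rw [Set.ncard_eq_toFinset_card _ hwidth]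
  rw [hsum1, hncard]
  have hCS : (∑ g ∈ Wf, x g) ^ 2 ≤ (Wf.card : ℝ) * ∑ g ∈ Wf, x g ^ 2 :=
    sq_sum_le_card_mul_sum_sq
  have hSnn : (0:ℝ) ≤ ∑ g ∈ Wf, x g ^ 2 := Finset.sum_nonneg fun g _ => sq_nonneg _
  by_cases hK0 : K ≤ 0
  · -- then the ℓ² norm is zero
    have h0 : ENNReal.ofReal K = 0 := ENNReal.ofReal_eq_zero.mpr hK0
    rw [h0, zero_mul] at hKf
    have hsq0 : Real.sqrt (∑' g : G, ‖f g‖ ^ 2) = 0 := by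
      have := ENNReal.ofReal_eq_zero.mp (le_antisymm hKf zero_le)
      have hnn : 0 ≤ Real.sqrt (∑' g : G, ‖f g‖ ^ 2) := Real.sqrt_nonneg _
      linarith
    have hS0 : (∑ g ∈ Wf, x g ^ 2) = 0 := by
      have h := Real.sqrt_eq_zero'.mp hsq0
      rw [hsum2] at h
      linarith
    have hxz : ∀ g ∈ Wf, x g = 0 := by
      intro g hg
      have := (Finset.sum_eq_zero_iff_of_nonneg fun g _ => sq_nonneg (x g)).mp hS0 g hg
      exact pow_eq_zero_iff (two_ne_zero) |>.mp this
    have hD0 : (∑ g ∈ Wf, x g) = 0 := Finset.sum_eq_zero hxz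
    rw [hD0]
    have : (0:ℝ) ^ 2 / (Wf.card : ℝ) = 0 := by simp
    rw [this]
    positivity
  · push_neg at hK0
    have hKnn : 0 ≤ K := le_of_lt hK0
    have hKf2 : ENNReal.ofReal (Real.sqrt (∑' g : G, ‖f g‖ ^ 2)) ≤ ENNReal.ofReal (K * 2) := by
      calc ENNReal.ofReal (Real.sqrt (∑' g : G, ‖f g‖ ^ 2))
          ≤ ENNReal.ofReal K * T1norm f := hKf
        _ ≤ ENNReal.ofReal K * 2 := by
            exact mul_le_mul_right hT1 _
        _ = ENNReal.ofReal (K * 2) := by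
            rw [ENNReal.ofReal_mul hKnn, ENNReal.ofReal_ofNat]
    have hsqrt : Real.sqrt (∑' g : G, ‖f g‖ ^ 2) ≤ K * 2 :=
      (ENNReal.ofReal_le_ofReal_iff (by positivity)).mp hKf2
    have hS : (∑ g ∈ Wf, x g ^ 2) ≤ 4 * K ^ 2 := by
      have h1 : (∑' g : G, ‖f g‖ ^ 2) ≤ (K * 2) ^ 2 := by
        have h2 : (0:ℝ) ≤ ∑' g : G, ‖f g‖ ^ 2 := by rw [hsum2]; exact hSnn
        calc (∑' g : G, ‖f g‖ ^ 2) = Real.sqrt (∑' g : G, ‖f g‖ ^ 2) ^ 2 :=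
              (Real.sq_sqrt h2).symm
          _ ≤ (K * 2) ^ 2 := by
              have := Real.sqrt_nonneg (∑' g : G, ‖f g‖ ^ 2)
              nlinarith
      rw [hsum2] at h1
      nlinarith
    rcases Nat.eq_zero_or_pos Wf.card with hcard | hcard
    · have hWfe : Wf = ∅ := Finset.card_eq_zero.mp hcard
      rw [hWfe]
      simp only [Finset.sum_empty, Finset.card_empty, Nat.cast_zero, ne_eq]
      rw [zero_pow (two_ne_zero), zero_div]
      positivity
    · have hpos : (0:ℝ) < (Wf.card : ℝ) := by exact_mod_cast hcard
      rw [div_le_iff₀ hpos]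
      calc (∑ g ∈ Wf, x g) ^ 2 ≤ (Wf.card : ℝ) * ∑ g ∈ Wf, x g ^ 2 := hCS
        _ ≤ (Wf.card : ℝ) * (4 * K ^ 2) := by
            exact mul_le_mul_of_nonneg_left hS (Nat.cast_nonneg _)
        _ = 4 * K ^ 2 * (Wf.card : ℝ) := by ring
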